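/- Let 𝔓 be a Lie algebra of polynomial vector fields on ℝ^n containing all constant fields and the Euler field E, and let f be an element of the centroid C(𝔓), i.e., an endomorphism with f[X,Y] = [fX,Y] = [X,fY] for all X,Y ∈ 𝔓. Then f is homogeneous of degree 0: for every Y ∈ 𝔓_m (m ≥ −1), f(Y) ∈ 𝔓_m. Moreover, writing E'_0 = f(E), one has f(Y) = (1/m)[E'_0, Y] for all Y ∈ 𝔓_m with m ≠ 0, and [E'_0, Y] = 0 for all Y ∈ 𝔓_0. -/

import Mathlib

open MvPolynomial

/-- Polynomial vector fields on ℝⁿ, given by their polynomial components. -/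
abbrev PVF (n : ℕ) : Type := Fin n → MvPolynomial (Fin n) ℝ

/-- The Lie bracket of polynomial vector fields:
`[X,Y]^j = Σ_i (X^i ∂(Y^j)/∂x^i − Y^i ∂(X^j)/∂x^i)`. -/
noncomputable def vbracket {n : ℕ} (X Y : PVF n) : PVF n :=
  fun j => ∑ i : Fin n, (X i * pderiv i (Y j) - Y i * pderiv i (X j))

/-- The Euler vector field `E = Σ_i x^i ∂/∂x^i`. -/
noncomputable def eulerVF (n : ℕ) : PVF n := fun j => MvPolynomial.X j

/-- The constant vector field `∂/∂x^i`. -/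
noncomputable def constVF {n : ℕ} (i : Fin n) : PVF n := fun j => if j = i then 1 else 0

/-- A polynomial vector field is homogeneous of degree `i` (an element of `𝔥_i`)
if all its components are homogeneous polynomials of degree `i+1` (the zero field
is homogeneous of every degree). -/
def IsHomog {n : ℕ} (i : ℤ) (X : PVF n) : Prop :=
  (∃ d : ℕ, (d : ℤ) = i + 1 ∧ ∀ k, (X k).IsHomogeneous d) ∨ X = 0

lemma coeff_X_mul_pderiv {n : ℕ} (i : Fin n) (p : MvPolynomial (Fin n) ℝ) (σ : Fin n →₀ ℕ) :
    coeff σ (X i * pderiv i p) = (σ i : ℝ) * coeff σ p := by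
  induction p using MvPolynomial.induction_on' with
  | add p q hp hq => simp [mul_add, coeff_add, hp, hq]
  | monomial u a =>
    rw [pderiv_monomial, X, monomial_mul, one_mul, coeff_monomial, coeff_monomial]
    rcases eq_or_ne (u i) 0 with h | h
    · rcases eq_or_ne u σ with rfl | h3
      · simp [h]
      · simp [h, h3]
    · have hu : Finsupp.single i 1 + (u - Finsupp.single i 1) = u := by
        ext j
        rcases eq_or_ne j i with rfl | hj
        · simp only [Finsupp.add_apply, Finsupp.tsub_apply, Finsupp.single_eq_same]
          omega
        · simp [Finsupp.single_apply, hj.symm, Ne.symm hj]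
      rw [hu]
      rcases eq_or_ne u σ with rfl | h3
      · simp; ring
      · simp [h3]

lemma degree_eq_sum' {n : ℕ} (σ : Fin n →₀ ℕ) : σ.degree = ∑ i : Fin n, σ i := by
  rw [Finsupp.degree]
  exact Finset.sum_subset (Finset.subset_univ _)
    (fun i _ hi => Finsupp.notMem_support_iff.mp hi)

lemma euler_forward {n d : ℕ} {p : MvPolynomial (Fin n) ℝ} (hp : p.IsHomogeneous d) :
    ∑ i : Fin n, X i * pderiv i p = (d : ℝ) • p := by
  apply MvPolynomial.ext
  intro σ
  rw [coeff_smul, coeff_sum]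
  simp only [coeff_X_mul_pderiv]
  rw [← Finset.sum_mul, ← Nat.cast_sum, ← degree_eq_sum']
  rcases eq_or_ne (coeff σ p) 0 with h | h
  · simp [h]
  · rw [Finsupp.degree_eq_weight_one, show (Finsupp.weight fun _ => (1:ℕ)) σ = d from hp h]; rfl

lemma euler_backward {n d : ℕ} {p : MvPolynomial (Fin n) ℝ}
    (h : ∑ i : Fin n, X i * pderiv i p = (d : ℝ) • p) :
    p.IsHomogeneous d := by
  intro σ hσ
  have h2 := congrArg (coeff σ) h
  rw [coeff_smul, coeff_sum] at h2
  simp only [coeff_X_mul_pderiv] at h2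
  rw [← Finset.sum_mul, ← Nat.cast_sum, ← degree_eq_sum'] at h2
  rw [show (Finsupp.weight 1 : (Fin n →₀ ℕ) →+ ℕ) = Finsupp.weight (fun _ => 1) from rfl, ← Finsupp.degree_eq_weight_one]
  have h3 : (σ.degree : ℝ) * coeff σ p = (d : ℝ) * coeff σ p := by
    rw [h2]; exact smul_eq_mul ..
  exact_mod_cast mul_right_cancel₀ hσ h3

lemma vbracket_euler {n : ℕ} (Z : PVF n) (j : Fin n) :
    vbracket (eulerVF n) Z j = (∑ i : Fin n, X i * pderiv i (Z j)) - Z j := by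
  rw [vbracket, Finset.sum_sub_distrib]
  congr 1
  show ∑ i : Fin n, Z i * pderiv i (X j) = Z j
  rw [Finset.sum_eq_single j]
  · rw [pderiv_X_self, mul_one]
  · intro i _ hij
    rw [pderiv_X_of_ne (Ne.symm hij), mul_zero]
  · intro h; exact absurd (Finset.mem_univ j) h

theorem centroid_homogeneous_degree_zero (n : ℕ) (P : Submodule ℝ (PVF n))
    (hE : eulerVF n ∈ P)
    (hconst : ∀ i : Fin n, constVF i ∈ P)
    (hbr : ∀ X ∈ P, ∀ Y ∈ P, vbracket X Y ∈ P)
    (f : PVF n →ₗ[ℝ] PVF n) (hfP : ∀ X ∈ P, f X ∈ P)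
    (hcent : ∀ X ∈ P, ∀ Y ∈ P,
      f (vbracket X Y) = vbracket (f X) Y ∧ f (vbracket X Y) = vbracket X (f Y)) :
    ∀ m : ℤ, -1 ≤ m → ∀ Y ∈ P, IsHomog m Y →
      IsHomog m (f Y) ∧
      (m ≠ 0 → f Y = (m : ℝ)⁻¹ • vbracket (f (eulerVF n)) Y) ∧
      (m = 0 → vbracket (f (eulerVF n)) Y = 0) := by
  intro m hm Y hY hYhom
  rcases hYhom with ⟨d, hd, hk⟩ | rfl
  · have hdm : (d : ℝ) = (m : ℝ) + 1 := by exact_mod_cast congrArg (fun z : ℤ => (z : ℝ)) hd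
    have hEY : vbracket (eulerVF n) Y = (m : ℝ) • Y := by
      funext j
      rw [vbracket_euler, euler_forward (hk j), hdm, Pi.smul_apply, add_smul, one_smul,
        add_sub_cancel_right]
    obtain ⟨h1, h2⟩ := hcent (eulerVF n) hE Y hY
    rw [hEY, map_smul] at h1 h2
    refine ⟨Or.inl ⟨d, hd, fun j => ?_⟩, ?_, ?_⟩
    · apply euler_backward (d := d)
      have h3 := congrFun h2.symm j
      rw [vbracket_euler, Pi.smul_apply] at h3
      rw [hdm, add_smul, one_smul, ← h3, sub_add_cancel]
    · intro hm0
      have hmr : (m : ℝ) ≠ 0 := Int.cast_ne_zero.mpr hm0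
      rw [← h1, smul_smul, inv_mul_cancel₀ hmr, one_smul]
    · intro hm0
      rw [← h1, hm0, Int.cast_zero, zero_smul]
  · have h0 : f 0 = 0 := map_zero f
    have hz : vbracket (f (eulerVF n)) 0 = 0 := by
      funext j; simp [vbracket]
    exact ⟨Or.inr h0, fun _ => by rw [h0, hz, smul_zero], fun _ => hz⟩
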